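/- arXiv:2407.19446 — 2 statements merged into one kernel-verified Lean document; each statement's English description precedes it below -/
import Mathlib

section
/- Let A ∈ ℝ^{N×N} be symmetric with eigenvalues λ1(A) ≥ λ2(A) ≥ … ordered decreasingly and λr(A) > 0, and let Ã = A + W with W symmetric. Let F ∈ ℝ^{N×r} (resp. F̃) have orthonormal columns consisting of eigenvectors of A (resp. Ã) corresponding to its r largest eigenvalues. Let H = FᵀF̃ have SVD AΣ̃Bᵀ and set G = ABᵀ. Define δ = λr(A) − λ_{r+1}(A). If ‖W‖₂ < δ, then ‖G − H‖_F ≤ ‖WF‖_F/(δ − ‖W‖₂). -/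
open Matrix MeasureTheory
open scoped Classical

noncomputable section

/-- Euclidean norm of a finitely-indexed real vector. -/
def vecNorm {n : Type*} [Fintype n] (v : n → ℝ) : ℝ :=
  Real.sqrt (∑ j, (v j) ^ 2)

/-- Spectral norm (ℓ₂ operator norm) of a real matrix. -/
def specNorm {m n : Type*} [Fintype m] [Fintype n] (A : Matrix m n ℝ) : ℝ :=
  sSup {c : ℝ | ∃ x : n → ℝ, vecNorm x ≤ 1 ∧ c = vecNorm (A.mulVec x)}

/-- Frobenius norm of a real matrix. -/
def frobNorm {m n : Type*} [Fintype m] [Fintype n] (A : Matrix m n ℝ) : ℝ :=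
  Real.sqrt (∑ i, ∑ j, (A i j) ^ 2)

/-- Entrywise maximum norm ‖·‖_∞ of a real matrix. -/
def maxNorm {m n : Type*} [Fintype m] [Fintype n] (A : Matrix m n ℝ) : ℝ :=
  ⨆ i, ⨆ j, |A i j|

/-- Two-to-infinity norm ‖·‖_{2,∞}: maximum Euclidean norm of a row. -/
def twoInfNorm {m n : Type*} [Fintype m] [Fintype n] (A : Matrix m n ℝ) : ℝ :=
  ⨆ i, vecNorm (fun j => A i j)

set_option linter.unusedSectionVars false

namespace DK

variable {l m n k o o' : Type*} [Fintype l] [Fintype m] [Fintype n] [Fintype k] [Fintype o]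
  [Fintype o'] [DecidableEq m] [DecidableEq n] [DecidableEq k] [DecidableEq o]

/-! ### Sum-of-squares -/

def sSq (M : Matrix m n ℝ) : ℝ := ∑ i, ∑ j, (M i j)^2

lemma sSq_nonneg (M : Matrix m n ℝ) : 0 ≤ sSq M := by
  apply Finset.sum_nonneg; intro i _; apply Finset.sum_nonneg; intro j _; positivity

lemma sSq_eq_trace (M : Matrix m n ℝ) : sSq M = Matrix.trace (Mᵀ * M) := by
  simp only [sSq, Matrix.trace, Matrix.mul_apply, Matrix.diag, Matrix.transpose_apply, pow_two]
  rw [Finset.sum_comm]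

lemma sSq_transpose (M : Matrix m n ℝ) : sSq Mᵀ = sSq M := by
  unfold sSq; rw [Finset.sum_comm]; rfl

lemma sSq_mul_orth_left (A : Matrix k m ℝ) (hA : Aᵀ * A = 1) (M : Matrix m n ℝ) :
    sSq (A * M) = sSq M := by
  rw [sSq_eq_trace, sSq_eq_trace, Matrix.transpose_mul, Matrix.mul_assoc,
    ← Matrix.mul_assoc Aᵀ, hA, Matrix.one_mul]

lemma sSq_mul_orth_right (B : Matrix k n ℝ) (hB : Bᵀ * B = 1) (M : Matrix m n ℝ) :
    sSq (M * Bᵀ) = sSq M := by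
  rw [← sSq_transpose (M * Bᵀ), Matrix.transpose_mul, Matrix.transpose_transpose,
    sSq_mul_orth_left B hB, sSq_transpose]

lemma sSq_le_of_entry (M M' : Matrix m n ℝ) (h : ∀ i j, |M i j| ≤ |M' i j|) :
    sSq M ≤ sSq M' := by
  apply Finset.sum_le_sum; intro i _; apply Finset.sum_le_sum; intro j _
  calc (M i j)^2 = |M i j|^2 := (sq_abs _).symm
    _ ≤ |M' i j|^2 := by apply pow_le_pow_left₀ (abs_nonneg _) (h i j)
    _ = (M' i j)^2 := sq_abs _

lemma sSq_smul (a : ℝ) (M : Matrix m n ℝ) : sSq (a • M) = a^2 * sSq M := by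
  unfold sSq
  rw [Finset.mul_sum]
  apply Finset.sum_congr rfl; intro i _
  rw [Finset.mul_sum]
  apply Finset.sum_congr rfl; intro j _
  simp [mul_pow]

lemma sSq_diagonal (σ : n → ℝ) : sSq (Matrix.diagonal σ) = ∑ i, (σ i)^2 := by
  unfold sSq
  apply Finset.sum_congr rfl; intro i _
  rw [Finset.sum_eq_single i]
  · simp
  · intro b _ hb; simp [Matrix.diagonal_apply_ne' _ hb]
  · simp

lemma frobNorm_eq_sSq (M : Matrix m n ℝ) : frobNorm M = Real.sqrt (sSq M) := rfl

/-! ### Submatrix algebra -/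

lemma mul_sub_col (A : Matrix l m ℝ) (B : Matrix m n ℝ) (e : o → n) :
    A * B.submatrix id e = (A * B).submatrix id e := by
  ext i j; simp [Matrix.mul_apply]

lemma orth_sub_mul (P : Matrix n n ℝ) (hP : Pᵀ * P = 1) (e : o → n) (e' : o' → n) :
    (P.submatrix id e)ᵀ * (P.submatrix id e') = (1 : Matrix n n ℝ).submatrix e e' := by
  ext j j'
  have h1 : (Pᵀ * P) (e j) (e' j') = (1 : Matrix n n ℝ) (e j) (e' j') := by rw [hP]
  simpa [Matrix.mul_apply] using h1

lemma sub_mul_diag (P : Matrix n n ℝ) (μ : n → ℝ) (e : o → n) :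
    (P * Matrix.diagonal μ).submatrix id e = P.submatrix id e * Matrix.diagonal (μ ∘ e) := by
  ext i j; simp [Matrix.mul_apply, Matrix.diagonal, Finset.sum_ite_eq]

lemma eig_mul_sub (P : Matrix n n ℝ) (hP : Pᵀ * P = 1) (μ : n → ℝ) (e : o → n) :
    (P * Matrix.diagonal μ * Pᵀ) * (P.submatrix id e)
      = P.submatrix id e * Matrix.diagonal (μ ∘ e) := by
  rw [Matrix.mul_assoc, mul_sub_col Pᵀ P e, hP, mul_sub_col (P * Matrix.diagonal μ) 1 e,
    Matrix.mul_one, sub_mul_diag]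

lemma orthcols (P : Matrix n n ℝ) (hP : Pᵀ * P = 1) (e : o → n) (he : Function.Injective e) :
    (P.submatrix id e)ᵀ * (P.submatrix id e) = 1 := by
  rw [orth_sub_mul P hP e e, Matrix.submatrix_one e he]

lemma quad_sub (M : Matrix n n ℝ) (P₁ : Matrix n o ℝ) (c : o → ℝ) :
    (P₁.mulVec c) ⬝ᵥ M.mulVec (P₁.mulVec c) = c ⬝ᵥ (P₁ᵀ * M * P₁).mulVec c := by
  rw [Matrix.mulVec_mulVec, Matrix.dotProduct_mulVec, ← Matrix.vecMul_transpose,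
    Matrix.vecMul_vecMul, ← Matrix.dotProduct_mulVec, ← Matrix.mul_assoc]

lemma dot_diag (μ : o → ℝ) (c : o → ℝ) :
    c ⬝ᵥ (Matrix.diagonal μ).mulVec c = ∑ j, μ j * c j ^ 2 := by
  simp only [dotProduct, Matrix.mulVec_diagonal]
  exact Finset.sum_congr rfl (fun x _ => by ring)

/-! ### vecNorm and specNorm -/

lemma dot_self_eq (v : n → ℝ) : v ⬝ᵥ v = ∑ j, (v j) ^ 2 := by
  simp [dotProduct, pow_two]

lemma vecNorm_nonneg (v : n → ℝ) : 0 ≤ vecNorm v := Real.sqrt_nonneg _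

lemma vecNorm_sq (v : n → ℝ) : vecNorm v ^ 2 = v ⬝ᵥ v := by
  rw [dot_self_eq, vecNorm, Real.sq_sqrt]; positivity

lemma vecNorm_smul (a : ℝ) (v : n → ℝ) : vecNorm (a • v) = |a| * vecNorm v := by
  unfold vecNorm
  rw [← Real.sqrt_sq_eq_abs, ← Real.sqrt_mul (sq_nonneg a), Finset.mul_sum]
  congr 1; apply Finset.sum_congr rfl; intro j _; simp [mul_pow]

lemma vecNorm_eq_zero {v : n → ℝ} (h : vecNorm v = 0) : v = 0 := by
  have h2 : ∑ j, (v j)^2 = 0 := by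
    have := vecNorm_sq v
    rw [h, dot_self_eq] at this; simpa using this.symm
  funext j
  have := (Finset.sum_eq_zero_iff_of_nonneg (fun i _ => sq_nonneg (v i))).mp h2 j (Finset.mem_univ j)
  exact pow_eq_zero_iff (n := 2) (by norm_num) |>.mp this

lemma cauchy_schwarz (v w : n → ℝ) : v ⬝ᵥ w ≤ vecNorm v * vecNorm w := by
  have h := Finset.sum_mul_sq_le_sq_mul_sq Finset.univ v w
  have h2 : (v ⬝ᵥ w)^2 ≤ (vecNorm v * vecNorm w)^2 := by
    rw [mul_pow, vecNorm_sq, vecNorm_sq, dot_self_eq, dot_self_eq]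
    simpa [dotProduct] using h
  have h3 := Real.sqrt_le_sqrt h2
  rw [Real.sqrt_sq_eq_abs, Real.sqrt_sq (mul_nonneg (vecNorm_nonneg v) (vecNorm_nonneg w))] at h3
  exact le_trans (le_abs_self _) h3

lemma bddAbove_spec (A : Matrix m n ℝ) :
    BddAbove {c : ℝ | ∃ x : n → ℝ, vecNorm x ≤ 1 ∧ c = vecNorm (A.mulVec x)} := by
  refine ⟨Real.sqrt (∑ i, ∑ j, (A i j)^2), ?_⟩
  rintro c ⟨x, hx, rfl⟩
  have hx2 : ∑ j, (x j)^2 ≤ 1 := by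
    have h1 : Real.sqrt (∑ j, (x j)^2) ≤ 1 := hx
    nlinarith [Real.sq_sqrt (show (0:ℝ) ≤ ∑ j, (x j)^2 by positivity),
      Real.sqrt_nonneg (∑ j, (x j)^2)]
  unfold vecNorm
  apply Real.sqrt_le_sqrt
  have hb : ∀ i, (A.mulVec x i)^2 ≤ (∑ j, (A i j)^2) := by
    intro i
    have h := Finset.sum_mul_sq_le_sq_mul_sq Finset.univ (fun j => A i j) x
    calc (A.mulVec x i)^2 = (∑ j, A i j * x j)^2 := by rfl
      _ ≤ (∑ j, (A i j)^2) * (∑ j, (x j)^2) := h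
      _ ≤ (∑ j, (A i j)^2) * 1 := by
          apply mul_le_mul_of_nonneg_left hx2 (by positivity)
      _ = ∑ j, (A i j)^2 := mul_one _
  exact Finset.sum_le_sum (fun i _ => hb i)

lemma specNorm_nonneg (A : Matrix m n ℝ) : 0 ≤ specNorm A := by
  apply le_csSup (bddAbove_spec A)
  exact ⟨0, by simp [vecNorm], by simp [vecNorm, Matrix.mulVec]⟩

lemma mulVec_le_spec (A : Matrix m n ℝ) (x : n → ℝ) :
    vecNorm (A.mulVec x) ≤ specNorm A * vecNorm x := by
  rcases eq_or_ne (vecNorm x) 0 with h | h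
  · rw [vecNorm_eq_zero h]
    simp [Matrix.mulVec_zero, h, vecNorm]
  · have hpos : 0 < vecNorm x := lt_of_le_of_ne (vecNorm_nonneg x) (Ne.symm h)
    have key : vecNorm (A.mulVec ((vecNorm x)⁻¹ • x)) ≤ specNorm A := by
      apply le_csSup (bddAbove_spec A)
      refine ⟨(vecNorm x)⁻¹ • x, ?_, rfl⟩
      rw [vecNorm_smul, abs_of_pos (by positivity), inv_mul_cancel₀ h]
    rw [Matrix.mulVec_smul, vecNorm_smul, abs_of_pos (by positivity)] at key
    calc vecNorm (A.mulVec x) = vecNorm x * ((vecNorm x)⁻¹ * vecNorm (A.mulVec x)) := by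
          field_simp
      _ ≤ vecNorm x * specNorm A := mul_le_mul_of_nonneg_left key hpos.le
      _ = specNorm A * vecNorm x := mul_comm _ _

lemma quad_le_spec (A : Matrix n n ℝ) (x : n → ℝ) :
    x ⬝ᵥ A.mulVec x ≤ specNorm A * (x ⬝ᵥ x) := by
  calc x ⬝ᵥ A.mulVec x ≤ vecNorm x * vecNorm (A.mulVec x) := cauchy_schwarz _ _
    _ ≤ vecNorm x * (specNorm A * vecNorm x) :=
        mul_le_mul_of_nonneg_left (mulVec_le_spec A x) (vecNorm_nonneg x)
    _ = specNorm A * (vecNorm x * vecNorm x) := by ring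
    _ = specNorm A * (x ⬝ᵥ x) := by rw [← vecNorm_sq]; ring_nf

/-! ### Eigen quadratic forms and Weyl -/

lemma quad_eig {N : ℕ} (P : Matrix (Fin N) (Fin N) ℝ) (hP : Pᵀ * P = 1) (μ : Fin N → ℝ)
    {k : ℕ} (e : Fin k → Fin N) (he : Function.Injective e) (c : Fin k → ℝ) :
    ((P.submatrix id e).mulVec c) ⬝ᵥ
      (P * Matrix.diagonal μ * Pᵀ).mulVec ((P.submatrix id e).mulVec c)
      = ∑ j, μ (e j) * c j ^ 2 := by
  rw [quad_sub, Matrix.mul_assoc, eig_mul_sub P hP μ e, ← Matrix.mul_assoc,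
    orthcols P hP e he, Matrix.one_mul, dot_diag]
  rfl

lemma norm_eig {N : ℕ} (P : Matrix (Fin N) (Fin N) ℝ) (hP : Pᵀ * P = 1)
    {k : ℕ} (e : Fin k → Fin N) (he : Function.Injective e) (c : Fin k → ℝ) :
    ((P.submatrix id e).mulVec c) ⬝ᵥ ((P.submatrix id e).mulVec c) = c ⬝ᵥ c := by
  have h := quad_sub (1 : Matrix (Fin N) (Fin N) ℝ) (P.submatrix id e) c
  rw [Matrix.one_mulVec, Matrix.mul_one, orthcols P hP e he, Matrix.one_mulVec] at h
  exact h

lemma weyl {N r : ℕ} (hrN : r < N)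
    (Am W : Matrix (Fin N) (Fin N) ℝ)
    (Q Qt : Matrix (Fin N) (Fin N) ℝ) (lam lamt : Fin N → ℝ)
    (hQ : Qᵀ * Q = 1) (hQt : Qtᵀ * Qt = 1)
    (hlam : ∀ i j : Fin N, i ≤ j → lam j ≤ lam i)
    (hlamt : ∀ i j : Fin N, i ≤ j → lamt j ≤ lamt i)
    (hAeig : Am = Q * Matrix.diagonal lam * Qᵀ)
    (hAteig : Am + W = Qt * Matrix.diagonal lamt * Qtᵀ) :
    lamt ⟨r, hrN⟩ ≤ lam ⟨r, hrN⟩ + specNorm W := by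
  set e₁ : Fin (r + 1) → Fin N := Fin.castLE (by omega) with he₁def
  set e₂ : Fin (N - r) → Fin N := fun j => ⟨r + j, by omega⟩ with he₂def
  have he₁ : Function.Injective e₁ := Fin.castLE_injective _
  have he₂ : Function.Injective e₂ := by
    intro a b hab
    have : r + (a : ℕ) = r + b := by simpa [he₂def, Fin.ext_iff] using hab
    exact Fin.ext (by omega)
  set M₁ := Qt.submatrix id e₁ with hM₁
  set M₂ := Q.submatrix id e₂ with hM₂
  have hM₁inj : Function.Injective M₁.mulVecLin := by
    intro a b hab
    have h2 : M₁ᵀ.mulVec (M₁.mulVec a) = M₁ᵀ.mulVec (M₁.mulVec b) := by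
      simpa using congrArg M₁ᵀ.mulVec hab
    rwa [Matrix.mulVec_mulVec, Matrix.mulVec_mulVec, orthcols Qt hQt e₁ he₁,
      Matrix.one_mulVec, Matrix.one_mulVec] at h2
  have hM₂inj : Function.Injective M₂.mulVecLin := by
    intro a b hab
    have h2 : M₂ᵀ.mulVec (M₂.mulVec a) = M₂ᵀ.mulVec (M₂.mulVec b) := by
      simpa using congrArg M₂ᵀ.mulVec hab
    rwa [Matrix.mulVec_mulVec, Matrix.mulVec_mulVec, orthcols Q hQ e₂ he₂,
      Matrix.one_mulVec, Matrix.one_mulVec] at h2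
  set U := LinearMap.range M₁.mulVecLin with hU
  set V := LinearMap.range M₂.mulVecLin with hV
  have hUr : Module.finrank ℝ U = r + 1 := by
    rw [hU, LinearMap.finrank_range_of_inj hM₁inj]; simp
  have hVr : Module.finrank ℝ V = N - r := by
    rw [hV, LinearMap.finrank_range_of_inj hM₂inj]; simp
  have hsum := Submodule.finrank_sup_add_finrank_inf_eq U V
  have hle : Module.finrank ℝ ↥(U ⊔ V) ≤ N := by
    have := Submodule.finrank_le (U ⊔ V)
    simpa using this
  have hinf : 0 < Module.finrank ℝ ↥(U ⊓ V) := by omega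
  have hnebot : U ⊓ V ≠ ⊥ := by
    intro hbot
    rw [hbot] at hinf; simp at hinf
  obtain ⟨x, hxUV, hx0⟩ := (Submodule.ne_bot_iff _).mp hnebot
  obtain ⟨c, hc⟩ := hxUV.1
  obtain ⟨d, hd⟩ := hxUV.2
  have hc' : M₁.mulVec c = x := hc
  have hd' : M₂.mulVec d = x := hd
  have hxx : 0 < x ⬝ᵥ x := by
    rcases lt_or_eq_of_le (by rw [dot_self_eq]; positivity : (0:ℝ) ≤ x ⬝ᵥ x) with h | h
    · exact h
    · exfalso; apply hx0
      funext j
      have h2 := (Finset.sum_eq_zero_iff_of_nonneg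
        (fun i (_ : i ∈ Finset.univ) => sq_nonneg (x i))).mp
        (by rw [← dot_self_eq, ← h])
      have := h2 j (Finset.mem_univ j)
      exact pow_eq_zero_iff (n := 2) (by norm_num) |>.mp this
  have hxAt : x ⬝ᵥ (Am + W).mulVec x ≤ (lam ⟨r, hrN⟩ + specNorm W) * (x ⬝ᵥ x) := by
    have hA : x ⬝ᵥ Am.mulVec x ≤ lam ⟨r, hrN⟩ * (x ⬝ᵥ x) := by
      rw [← hd', hAeig, quad_eig Q hQ lam e₂ he₂ d, norm_eig Q hQ e₂ he₂ d, dot_self_eq,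
        Finset.mul_sum]
      apply Finset.sum_le_sum
      intro j _
      have hle2 : (⟨r, hrN⟩ : Fin N) ≤ e₂ j := by
        simp [he₂def, Fin.le_def]
      exact mul_le_mul_of_nonneg_right (hlam _ _ hle2) (sq_nonneg _)
    have hWb := quad_le_spec W x
    calc x ⬝ᵥ (Am + W).mulVec x = x ⬝ᵥ Am.mulVec x + x ⬝ᵥ W.mulVec x := by
          rw [Matrix.add_mulVec, dotProduct_add]
      _ ≤ lam ⟨r, hrN⟩ * (x ⬝ᵥ x) + specNorm W * (x ⬝ᵥ x) := add_le_add hA hWb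
      _ = (lam ⟨r, hrN⟩ + specNorm W) * (x ⬝ᵥ x) := by ring
  have hxAt2 : lamt ⟨r, hrN⟩ * (x ⬝ᵥ x) ≤ x ⬝ᵥ (Am + W).mulVec x := by
    rw [← hc', hAteig, quad_eig Qt hQt lamt e₁ he₁ c, norm_eig Qt hQt e₁ he₁ c, dot_self_eq,
      Finset.mul_sum]
    apply Finset.sum_le_sum
    intro j _
    have hle1 : e₁ j ≤ (⟨r, hrN⟩ : Fin N) := by
      simp [he₁def, Fin.le_def]
      omega
    exact mul_le_mul_of_nonneg_right (hlamt _ _ hle1) (sq_nonneg _)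
  have := le_trans hxAt2 hxAt
  exact le_of_mul_le_mul_right (by linarith) hxx

/-! ### Column split -/

lemma sum_split {N r : ℕ} (hrN : r < N) (f : Fin N → ℝ) :
    ∑ i, f i = (∑ j : Fin r, f (Fin.castLE hrN.le j))
      + ∑ j : Fin (N - r), f ⟨r + j, by omega⟩ := by
  classical
  set e : Fin r ⊕ Fin (N - r) → Fin N :=
    Sum.elim (Fin.castLE hrN.le) (fun j => ⟨r + j, by omega⟩) with hedef
  have hbij : Function.Bijective e := by
    rw [Fintype.bijective_iff_injective_and_card]
    constructor
    · rintro (a | a) (b | b) hab <;> simp [hedef, Fin.ext_iff] at hab ⊢ <;> omega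
    · simp; omega
  rw [← Fintype.sum_bijective e hbij _ f (fun i => rfl)]
  simp [hedef]

end DK
namespace DK
/-- Column split of sum of squares. -/
lemma sSq_split {m : Type*} [Fintype m] {N r : ℕ} (hrN : r < N) (Y : Matrix m (Fin N) ℝ) :
    sSq Y = sSq (Y.submatrix id (Fin.castLE hrN.le))
      + sSq (Y.submatrix id (fun j : Fin (N - r) => ⟨r + j, by omega⟩)) := by
  unfold sSq
  rw [← Finset.sum_add_distrib]
  apply Finset.sum_congr rfl
  intro i _
  simpa using sum_split hrN (fun kk => (Y i kk)^2)

end DK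

set_option maxHeartbeats 1000000 in
open DK in
/-- `‖G − H‖_F ≤ ‖WF‖_F/(δ − ‖W‖₂)` where `H = FᵀF̃` and `G` is its orthogonal polar factor. -/
theorem stmt11 {N r : ℕ} (hr : 0 < r) (hrN : r < N)
    (Am W : Matrix (Fin N) (Fin N) ℝ) (hAsymm : Am.IsSymm) (hWsymm : W.IsSymm)
    -- eigendecompositions of A and Ã = A + W with decreasing eigenvalues
    (Q Qt : Matrix (Fin N) (Fin N) ℝ) (lam lamt : Fin N → ℝ)
    (hQ : Qᵀ * Q = 1) (hQt : Qtᵀ * Qt = 1)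
    (hlam : ∀ i j : Fin N, i ≤ j → lam j ≤ lam i)
    (hlamt : ∀ i j : Fin N, i ≤ j → lamt j ≤ lamt i)
    (hAeig : Am = Q * Matrix.diagonal lam * Qᵀ)
    (hAteig : Am + W = Qt * Matrix.diagonal lamt * Qtᵀ)
    (hpos : 0 < lam ⟨r - 1, by omega⟩)
    -- F, F̃: orthonormal eigenvectors for the r largest eigenvalues
    (F Ft : Matrix (Fin N) (Fin r) ℝ)
    (hF : F = Q.submatrix id (Fin.castLE hrN.le))
    (hFt : Ft = Qt.submatrix id (Fin.castLE hrN.le))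
    -- SVD of H = FᵀF̃ and the rotation G
    (A' B' : Matrix (Fin r) (Fin r) ℝ) (σtil : Fin r → ℝ)
    (hA' : A'ᵀ * A' = 1) (hB' : B'ᵀ * B' = 1) (hσtil : ∀ i, 0 ≤ σtil i)
    (hH : Fᵀ * Ft = A' * Matrix.diagonal σtil * B'ᵀ)
    (G : Matrix (Fin r) (Fin r) ℝ) (hG : G = A' * B'ᵀ)
    -- eigengap condition
    (δ : ℝ) (hδ : δ = lam ⟨r - 1, by omega⟩ - lam ⟨r, hrN⟩)
    (hW : specNorm W < δ) :
    frobNorm (G - Fᵀ * Ft) ≤ frobNorm (W * F) / (δ - specNorm W) := by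
  have hQQt : Q * Qᵀ = 1 := mul_eq_one_comm.mp hQ
  have hQtQt : Qt * Qtᵀ = 1 := mul_eq_one_comm.mp hQt
  set g : ℝ := δ - specNorm W with hgdef
  have hg : 0 < g := by simp [hgdef]; linarith
  set e₀ : Fin r → Fin N := Fin.castLE hrN.le with he₀def
  set e₂ : Fin (N - r) → Fin N := fun j => ⟨r + j, by omega⟩ with he₂def
  have he₀ : Function.Injective e₀ := Fin.castLE_injective _
  have he₂ : Function.Injective e₂ := by
    intro a b hab
    have : r + (a : ℕ) = r + b := by simpa [he₂def, Fin.ext_iff] using hab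
    exact Fin.ext (by omega)
  set Ftc := Qt.submatrix id e₂ with hFtc
  set X := Fᵀ * Ftc with hX
  set Md := Fᵀ * W * Ftc with hMd
  -- Weyl
  have hWeyl : lamt ⟨r, hrN⟩ ≤ lam ⟨r, hrN⟩ + specNorm W :=
    weyl hrN Am W Q Qt lam lamt hQ hQt hlam hlamt hAeig hAteig
  -- Sylvester relation
  have hAmF : Am * F = F * Matrix.diagonal (lam ∘ e₀) := by
    rw [hF, hAeig]; exact eig_mul_sub Q hQ lam e₀
  have hFAm : Fᵀ * Am = Matrix.diagonal (lam ∘ e₀) * Fᵀ := by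
    have h := congrArg Matrix.transpose hAmF
    rw [Matrix.transpose_mul, Matrix.transpose_mul, hAsymm.eq, Matrix.diagonal_transpose] at h
    exact h
  have hAtFtc : (Am + W) * Ftc = Ftc * Matrix.diagonal (lamt ∘ e₂) := by
    rw [hFtc, hAteig]; exact eig_mul_sub Qt hQt lamt e₂
  have key : Matrix.diagonal (lam ∘ e₀) * X + Md = X * Matrix.diagonal (lamt ∘ e₂) := by
    have h1 : Fᵀ * ((Am + W) * Ftc) = X * Matrix.diagonal (lamt ∘ e₂) := by
      rw [hAtFtc, hX, Matrix.mul_assoc]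
    have h2 : Fᵀ * ((Am + W) * Ftc) = Matrix.diagonal (lam ∘ e₀) * X + Md := by
      rw [Matrix.add_mul, Matrix.mul_add, ← Matrix.mul_assoc, hFAm, ← Matrix.mul_assoc, hMd,
        hX, Matrix.mul_assoc]
    rw [← h1, h2]
  -- entrywise bound
  have hentry : ∀ j k, |X j k| ≤ |((1/g) • Md) j k| := by
    intro j k
    have heq := congrFun (congrFun key j) k
    simp only [Matrix.add_apply, Matrix.diagonal_mul, Matrix.mul_diagonal] at heq
    have hgap : g ≤ lam (e₀ j) - lamt (e₂ k) := by
      have h1 : lam ⟨r - 1, by omega⟩ ≤ lam (e₀ j) := by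
        apply hlam
        simp [he₀def, Fin.le_def]
        omega
      have h2 : lamt (e₂ k) ≤ lamt ⟨r, hrN⟩ := by
        apply hlamt
        simp [he₂def, Fin.le_def]
      rw [hgdef, hδ]
      linarith
    have heq2 : (lam (e₀ j) - lamt (e₂ k)) * X j k = -Md j k := by
      have : lam (e₀ j) * X j k + Md j k = X j k * lamt (e₂ k) := heq
      linarith [this]
    have habs : (lam (e₀ j) - lamt (e₂ k)) * |X j k| = |Md j k| := by
      rw [← abs_neg (Md j k), ← heq2, abs_mul, abs_of_nonneg (by linarith : 0 ≤ lam (e₀ j) - lamt (e₂ k))]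
    have hb : g * |X j k| ≤ |Md j k| := by
      rw [← habs]
      exact mul_le_mul_of_nonneg_right hgap (abs_nonneg _)
    have hfin : |X j k| ≤ |Md j k| / g := by
      rw [le_div_iff₀ hg]; linarith
    rw [Matrix.smul_apply, smul_eq_mul, abs_mul, abs_of_pos (by positivity : (0:ℝ) < 1/g)]
    calc |X j k| ≤ |Md j k| / g := hfin
      _ = 1/g * |Md j k| := by ring
  -- sSq X ≤ sSq Md / g²
  have hXMd : sSq X ≤ sSq Md / g^2 := by
    calc sSq X ≤ sSq ((1/g) • Md) := sSq_le_of_entry _ _ hentry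
      _ = (1/g)^2 * sSq Md := sSq_smul _ _
      _ = sSq Md / g^2 := by field_simp
  -- sSq Md ≤ sSq (W * F)
  have hMdWF : sSq Md ≤ sSq (W * F) := by
    have hMdsub : Md = ((Fᵀ * W * Qt).submatrix id e₂) := by
      rw [hMd, hFtc, mul_sub_col (Fᵀ * W) Qt e₂]
    have hsplit := sSq_split hrN (Fᵀ * W * Qt)
    have h1 : sSq Md ≤ sSq (Fᵀ * W * Qt) := by
      rw [hMdsub]
      have := sSq_nonneg ((Fᵀ * W * Qt).submatrix id (Fin.castLE hrN.le))
      rw [hsplit]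
      linarith
    have h2 : sSq (Fᵀ * W * Qt) = sSq (W * F) := by
      have ha : sSq (Fᵀ * W * Qt) = sSq (Fᵀ * W) := by
        have : Fᵀ * W * Qt = (Fᵀ * W) * (Qtᵀ)ᵀ := by rw [Matrix.transpose_transpose]
        rw [this, sSq_mul_orth_right Qtᵀ (by rw [Matrix.transpose_transpose]; exact hQtQt)]
      have hbb : sSq (Fᵀ * W) = sSq (W * F) := by
        rw [← sSq_transpose (Fᵀ * W), Matrix.transpose_mul, Matrix.transpose_transpose,
          hWsymm.eq]
      rw [ha, hbb]
    linarith
  -- split: sSq X = r - sSq H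
  have hFF : Fᵀ * F = 1 := by rw [hF]; exact orthcols Q hQ e₀ he₀
  have hsSqF : sSq F = r := by
    rw [sSq_eq_trace, hFF, Matrix.trace_one]
    simp
  have hsSqFQt : sSq (Fᵀ * Qt) = r := by
    have : Fᵀ * Qt = Fᵀ * (Qtᵀ)ᵀ := by rw [Matrix.transpose_transpose]
    rw [this, sSq_mul_orth_right Qtᵀ (by rw [Matrix.transpose_transpose]; exact hQtQt),
      sSq_transpose, hsSqF]
  have hXr : sSq X = r - sSq (Fᵀ * Ft) := by
    have hsplit := sSq_split hrN (Fᵀ * Qt)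
    have hHsub : (Fᵀ * Qt).submatrix id (Fin.castLE hrN.le) = Fᵀ * Ft := by
      rw [hFt, mul_sub_col]
    have hXsub : (Fᵀ * Qt).submatrix id (fun j : Fin (N - r) => (⟨r + j, by omega⟩ : Fin N))
        = X := by
      rw [hX, hFtc, mul_sub_col]
    rw [hHsub, hXsub, hsSqFQt] at hsplit
    linarith
  -- sSq H = ∑ σ²
  have hHσ : sSq (Fᵀ * Ft) = ∑ i, (σtil i)^2 := by
    rw [hH, Matrix.mul_assoc, sSq_mul_orth_left A' hA', sSq_mul_orth_right B' hB', sSq_diagonal]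
  -- σtil i ≤ 1
  have hσle1 : ∀ i, σtil i ≤ 1 := by
    intro i
    set a : Fin r → ℝ := fun j => A' j i with hadef
    set b : Fin r → ℝ := fun j => B' j i with hbdef
    have hdiagid : A'ᵀ * (Fᵀ * Ft) * B' = Matrix.diagonal σtil := by
      rw [hH]
      have h : A'ᵀ * (A' * Matrix.diagonal σtil * B'ᵀ) * B'
          = (A'ᵀ * A') * (Matrix.diagonal σtil * (B'ᵀ * B')) := by
        simp only [Matrix.mul_assoc]
      rw [h, hA', hB', Matrix.one_mul, Matrix.mul_one]
    have hσi : σtil i = a ⬝ᵥ ((Fᵀ * Ft).mulVec b) := by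
      have h1 : (A'ᵀ * (Fᵀ * Ft) * B') i i = σtil i := by
        rw [hdiagid]; simp
      rw [← h1, Matrix.mul_assoc]
      simp only [Matrix.mul_apply, Matrix.mulVec, dotProduct, Matrix.transpose_apply]
      rfl
    have hna : vecNorm a = 1 := by
      have hsq : vecNorm a ^ 2 = 1 := by
        rw [vecNorm_sq, dot_self_eq]
        have : (A'ᵀ * A') i i = 1 := by rw [hA']; simp
        rw [← this]
        simp [Matrix.mul_apply, hadef, pow_two]
      rw [← Real.sqrt_sq (vecNorm_nonneg a), hsq, Real.sqrt_one]
    have hnb : b ⬝ᵥ b = 1 := by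
      rw [dot_self_eq]
      have : (B'ᵀ * B') i i = 1 := by rw [hB']; simp
      rw [← this]
      simp [Matrix.mul_apply, hbdef, pow_two]
    have hHb : vecNorm ((Fᵀ * Ft).mulVec b) ≤ 1 := by
      have hmv : (Fᵀ * Ft).mulVec b = Fᵀ.mulVec (Ft.mulVec b) := by
        rw [Matrix.mulVec_mulVec]
      have hFtb : (Ft.mulVec b) ⬝ᵥ (Ft.mulVec b) = 1 := by
        rw [hFt, norm_eig Qt hQt e₀ he₀ b, hnb]
      have hFz : ∀ z : Fin N → ℝ, (Fᵀ.mulVec z) ⬝ᵥ (Fᵀ.mulVec z) ≤ z ⬝ᵥ z := by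
        intro z
        have hq : Fᵀ.mulVec z = fun j => (Qᵀ.mulVec z) (e₀ j) := by
          funext j
          rw [hF]
          simp [Matrix.mulVec, dotProduct, Matrix.submatrix, Matrix.transpose_apply]
        have hQz : (Qᵀ.mulVec z) ⬝ᵥ (Qᵀ.mulVec z) = z ⬝ᵥ z := by
          have h := quad_sub (1 : Matrix (Fin N) (Fin N) ℝ) Qᵀ z
          rw [Matrix.one_mulVec, Matrix.mul_one, Matrix.transpose_transpose, hQQt,
            Matrix.one_mulVec] at h
          exact h
        rw [hq, ← hQz, dot_self_eq, dot_self_eq]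
        have hsplit := sum_split hrN (fun kk => ((Qᵀ.mulVec z) kk)^2)
        have hnn : (0:ℝ) ≤ ∑ j : Fin (N - r), ((Qᵀ.mulVec z) ⟨r + j, by omega⟩)^2 := by
          positivity
        rw [hsplit]
        simp only [he₀def]
        linarith
      have hsq : vecNorm ((Fᵀ * Ft).mulVec b) ^ 2 ≤ 1 := by
        rw [vecNorm_sq, hmv]
        calc (Fᵀ.mulVec (Ft.mulVec b)) ⬝ᵥ (Fᵀ.mulVec (Ft.mulVec b))
            ≤ (Ft.mulVec b) ⬝ᵥ (Ft.mulVec b) := hFz _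
          _ = 1 := hFtb
      nlinarith [vecNorm_nonneg ((Fᵀ * Ft).mulVec b)]
    have hcs := cauchy_schwarz a ((Fᵀ * Ft).mulVec b)
    rw [hna, one_mul] at hcs
    rw [hσi]
    exact le_trans hcs hHb
  -- sSq (G - H) = ∑ (1 - σ)²
  have hGH : sSq (G - Fᵀ * Ft) = ∑ i, (1 - σtil i)^2 := by
    have hform : G - Fᵀ * Ft = A' * Matrix.diagonal (fun i => 1 - σtil i) * B'ᵀ := by
      rw [hG, hH]
      have hd : Matrix.diagonal (fun i => 1 - σtil i)
          = (1 : Matrix (Fin r) (Fin r) ℝ) - Matrix.diagonal σtil := by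
        rw [← Matrix.diagonal_one, ← Matrix.diagonal_sub]
      rw [hd, Matrix.mul_sub, Matrix.mul_one, Matrix.sub_mul]
    rw [hform, Matrix.mul_assoc, sSq_mul_orth_left A' hA', sSq_mul_orth_right B' hB',
      sSq_diagonal]
  -- chain
  have hchain : sSq (G - Fᵀ * Ft) ≤ sSq X := by
    rw [hGH, hXr, hHσ]
    have h1 : ∑ i, (1 - σtil i)^2 ≤ ∑ i : Fin r, (1 - (σtil i)^2) := by
      apply Finset.sum_le_sum
      intro i _
      nlinarith [hσtil i, hσle1 i]
    have h2 : ∑ i : Fin r, (1 - (σtil i)^2) = r - ∑ i, (σtil i)^2 := by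
      rw [Finset.sum_sub_distrib]
      simp
    linarith
  -- final
  have htotal : sSq (G - Fᵀ * Ft) ≤ sSq (W * F) / g^2 := by
    have h1 : sSq Md / g^2 ≤ sSq (W * F) / g^2 := by gcongr
    linarith
  calc frobNorm (G - Fᵀ * Ft) = Real.sqrt (sSq (G - Fᵀ * Ft)) := frobNorm_eq_sSq _
    _ ≤ Real.sqrt (sSq (W * F) / g^2) := Real.sqrt_le_sqrt htotal
    _ = Real.sqrt (sSq (W * F)) / Real.sqrt (g^2) := Real.sqrt_div (sSq_nonneg _) _
    _ = frobNorm (W * F) / g := by rw [Real.sqrt_sq hg.le, frobNorm_eq_sSq]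
end
end

section
/- Let Ω ⊆ [n]×[n], p > 0, and for Z ∈ ℝ^{n×n} define (H_Ω Z)_{jk} = (1 − δ_{jk}/p)Z_{jk}, where δ_{jk} = 1 if (j,k) ∈ Ω and 0 otherwise. Then for all A, B, C, D ∈ ℝ^{n×r}: |⟨H_Ω(ACᵀ), BDᵀ⟩| ≤ ‖H_Ω(𝟏𝟏ᵀ)‖₂ · (‖A‖_{2,∞}‖B‖_F) · (‖C‖_F‖D‖_{2,∞}), where ⟨·,·⟩ denotes the entrywise (trace) inner product of matrices and 𝟏 is the all-ones vector in ℝⁿ. -/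
open Matrix MeasureTheory
open scoped Classical

noncomputable section

/-- The operator `H_Ω := I − p⁻¹ P_Ω`, i.e. `(H_Ω Z)_{jk} = (1 − δ_{jk}/p)·Z_{jk}`. -/
def hProj {n : ℕ} (Ω : Set (Fin n × Fin n)) (p : ℝ) (Z : Matrix (Fin n) (Fin n) ℝ) :
    Matrix (Fin n) (Fin n) ℝ :=
  Matrix.of fun j k => (1 - (if (j, k) ∈ Ω then (1 : ℝ) else 0) / p) * Z j k

lemma vecNorm_nonneg {n : Type*} [Fintype n] (v : n → ℝ) : 0 ≤ vecNorm v :=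
  Real.sqrt_nonneg _

lemma sq_vecNorm {n : Type*} [Fintype n] (v : n → ℝ) :
    vecNorm v ^ 2 = ∑ j, (v j) ^ 2 := by
  rw [vecNorm, Real.sq_sqrt (by positivity)]

lemma vecNorm_zero {n : Type*} [Fintype n] : vecNorm (0 : n → ℝ) = 0 := by
  simp [vecNorm]

lemma vecNorm_smul {n : Type*} [Fintype n] (c : ℝ) (v : n → ℝ) :
    vecNorm (c • v) = |c| * vecNorm v := by
  simp only [vecNorm, Pi.smul_apply, smul_eq_mul, mul_pow, ← Finset.mul_sum]
  rw [Real.sqrt_mul (sq_nonneg c), Real.sqrt_sq_eq_abs]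

lemma cs_sum {ι : Type*} [Fintype ι] (f g : ι → ℝ) :
    |∑ i, f i * g i| ≤ vecNorm f * vecNorm g := by
  have h := Finset.sum_mul_sq_le_sq_mul_sq Finset.univ f g
  calc |∑ i, f i * g i| = Real.sqrt ((∑ i, f i * g i) ^ 2) := (Real.sqrt_sq_eq_abs _).symm
    _ ≤ Real.sqrt ((∑ i, f i ^ 2) * ∑ i, g i ^ 2) := Real.sqrt_le_sqrt h
    _ = vecNorm f * vecNorm g := Real.sqrt_mul (by positivity) _

lemma mulVec_vecNorm_le_frob {m n : Type*} [Fintype m] [Fintype n]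
    (H : Matrix m n ℝ) (x : n → ℝ) (hx : vecNorm x ≤ 1) :
    vecNorm (H.mulVec x) ≤ frobNorm H := by
  have hx2 : ∑ j, x j ^ 2 ≤ 1 := by
    have := sq_vecNorm x
    nlinarith [vecNorm_nonneg x]
  rw [vecNorm, frobNorm]
  apply Real.sqrt_le_sqrt
  apply Finset.sum_le_sum
  intro i _
  calc (H.mulVec x i) ^ 2 = (∑ j, H i j * x j) ^ 2 := by rfl
    _ ≤ (∑ j, H i j ^ 2) * ∑ j, x j ^ 2 := Finset.sum_mul_sq_le_sq_mul_sq _ _ _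
    _ ≤ (∑ j, H i j ^ 2) * 1 := by
        apply mul_le_mul_of_nonneg_left hx2 (by positivity)
    _ = ∑ j, H i j ^ 2 := mul_one _

lemma specSet_bddAbove {m n : Type*} [Fintype m] [Fintype n] (H : Matrix m n ℝ) :
    BddAbove {c : ℝ | ∃ x : n → ℝ, vecNorm x ≤ 1 ∧ c = vecNorm (H.mulVec x)} := by
  refine ⟨frobNorm H, ?_⟩
  rintro c ⟨x, hx, rfl⟩
  exact mulVec_vecNorm_le_frob H x hx

lemma specNorm_nonneg {m n : Type*} [Fintype m] [Fintype n] (H : Matrix m n ℝ) :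
    0 ≤ specNorm H := by
  have h0 : (0 : ℝ) ∈ {c : ℝ | ∃ x : n → ℝ, vecNorm x ≤ 1 ∧ c = vecNorm (H.mulVec x)} := by
    refine ⟨0, by simp [vecNorm_zero], ?_⟩
    simp [Matrix.mulVec_zero, vecNorm_zero]
  exact le_csSup (specSet_bddAbove H) h0

lemma vecNorm_mulVec_le {m n : Type*} [Fintype m] [Fintype n] (H : Matrix m n ℝ) (x : n → ℝ) :
    vecNorm (H.mulVec x) ≤ specNorm H * vecNorm x := by
  rcases eq_or_lt_of_le (vecNorm_nonneg x) with h0 | hpos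
  · have hx : x = 0 := by
      funext j
      have hsum : ∑ k, x k ^ 2 = 0 := by
        have := sq_vecNorm x; rw [← this, ← h0]; ring
      have := (Finset.sum_eq_zero_iff_of_nonneg (fun k _ => sq_nonneg (x k))).mp hsum j
        (Finset.mem_univ j)
      exact pow_eq_zero_iff two_ne_zero |>.mp this
    rw [hx, Matrix.mulVec_zero]
    show vecNorm (0 : m → ℝ) ≤ _
    rw [vecNorm_zero, vecNorm_zero, mul_zero]
  · set t := vecNorm x with ht
    have hmem : vecNorm (H.mulVec (t⁻¹ • x)) ∈
        {c : ℝ | ∃ y : n → ℝ, vecNorm y ≤ 1 ∧ c = vecNorm (H.mulVec y)} := by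
      refine ⟨t⁻¹ • x, ?_, rfl⟩
      rw [vecNorm_smul, abs_of_pos (inv_pos.mpr hpos), ← ht,
        inv_mul_cancel₀ (ne_of_gt hpos)]
    have hle := le_csSup (specSet_bddAbove H) hmem
    rw [Matrix.mulVec_smul, vecNorm_smul, abs_of_pos (inv_pos.mpr hpos)] at hle
    have h2 := mul_le_mul_of_nonneg_left hle (le_of_lt hpos)
    rw [← mul_assoc, mul_inv_cancel₀ (ne_of_gt hpos), one_mul] at h2
    calc vecNorm (H *ᵥ x) ≤ t * sSup {c | ∃ x, vecNorm x ≤ 1 ∧ c = vecNorm (H *ᵥ x)} := h2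
      _ = specNorm H * t := mul_comm _ _

lemma bilinear_le {m n : Type*} [Fintype m] [Fintype n] (H : Matrix m n ℝ)
    (x : m → ℝ) (y : n → ℝ) :
    |∑ i, ∑ j, x i * H i j * y j| ≤ specNorm H * (vecNorm x * vecNorm y) := by
  have heq : ∑ i, ∑ j, x i * H i j * y j = ∑ i, x i * (H.mulVec y) i := by
    apply Finset.sum_congr rfl
    intro i _
    rw [Matrix.mulVec, dotProduct, Finset.mul_sum]
    apply Finset.sum_congr rfl
    intro j _; ring
  rw [heq]
  calc |∑ i, x i * (H.mulVec y) i| ≤ vecNorm x * vecNorm (H.mulVec y) := cs_sum _ _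
    _ ≤ vecNorm x * (specNorm H * vecNorm y) := by
        apply mul_le_mul_of_nonneg_left (vecNorm_mulVec_le H y) (vecNorm_nonneg x)
    _ = specNorm H * (vecNorm x * vecNorm y) := by ring

lemma sum4_swap {α β γ δ : Type*} [Fintype α] [Fintype β] [Fintype γ] [Fintype δ]
    (G : α → β → γ → δ → ℝ) :
    ∑ i, ∑ j, ∑ s, ∑ t, G i j s t = ∑ s, ∑ t, ∑ i, ∑ j, G i j s t := by
  calc ∑ i, ∑ j, ∑ s, ∑ t, G i j s t
      = ∑ i, ∑ s, ∑ t, ∑ j, G i j s t := by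
        refine Finset.sum_congr rfl fun i _ => ?_
        rw [Finset.sum_comm]
        exact Finset.sum_congr rfl fun s _ => Finset.sum_comm
    _ = ∑ s, ∑ i, ∑ t, ∑ j, G i j s t := Finset.sum_comm
    _ = ∑ s, ∑ t, ∑ i, ∑ j, G i j s t :=
        Finset.sum_congr rfl fun s _ => Finset.sum_comm

lemma sum3_swap {α β γ : Type*} [Fintype α] [Fintype β] [Fintype γ]
    (G : α → β → γ → ℝ) :
    ∑ s, ∑ t, ∑ i, G s t i = ∑ i, ∑ s, ∑ t, G s t i := by
  calc ∑ s, ∑ t, ∑ i, G s t i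
      = ∑ s, ∑ i, ∑ t, G s t i := Finset.sum_congr rfl fun s _ => Finset.sum_comm
    _ = ∑ i, ∑ s, ∑ t, G s t i := Finset.sum_comm

lemma twoInfNorm_nonneg {m n : Type*} [Fintype m] [Fintype n] (A : Matrix m n ℝ) :
    0 ≤ twoInfNorm A :=
  Real.iSup_nonneg fun i => vecNorm_nonneg _

lemma frobNorm_nonneg {m n : Type*} [Fintype m] [Fintype n] (A : Matrix m n ℝ) :
    0 ≤ frobNorm A := Real.sqrt_nonneg _

lemma pairNorm_le {n r : ℕ} (A B : Matrix (Fin n) (Fin r) ℝ) :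
    Real.sqrt (∑ s : Fin r, ∑ t : Fin r, (vecNorm fun i => A i s * B i t) ^ 2)
      ≤ twoInfNorm A * frobNorm B := by
  have hrow : ∀ i, ∑ s, A i s ^ 2 ≤ (twoInfNorm A) ^ 2 := by
    intro i
    have h1 : vecNorm (fun s => A i s) ≤ twoInfNorm A := by
      rw [twoInfNorm]
      exact le_ciSup (f := fun i => vecNorm (fun j => A i j))
        (Set.Finite.bddAbove (Set.finite_range _)) i
    calc ∑ s, A i s ^ 2 = vecNorm (fun s => A i s) ^ 2 := (sq_vecNorm _).symm
      _ ≤ (twoInfNorm A) ^ 2 := by nlinarith [vecNorm_nonneg (fun s => A i s)]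
  have key : ∑ s : Fin r, ∑ t : Fin r, (vecNorm fun i => A i s * B i t) ^ 2
      ≤ (twoInfNorm A) ^ 2 * (frobNorm B) ^ 2 := by
    have hv : ∀ s t, (vecNorm fun i => A i s * B i t) ^ 2
        = ∑ i, (A i s) ^ 2 * (B i t) ^ 2 := by
      intro s t; rw [sq_vecNorm]; simp [mul_pow]
    simp only [hv]
    rw [sum3_swap]
    have hfrob : (frobNorm B) ^ 2 = ∑ i, ∑ t, (B i t) ^ 2 := by
      rw [frobNorm, Real.sq_sqrt (by positivity)]
    rw [hfrob, Finset.mul_sum]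
    apply Finset.sum_le_sum
    intro i _
    rw [← Finset.sum_mul_sum]
    calc (∑ s, A i s ^ 2) * ∑ t, B i t ^ 2
        ≤ (twoInfNorm A) ^ 2 * ∑ t, B i t ^ 2 := by
          apply mul_le_mul_of_nonneg_right (hrow i) (by positivity)
      _ = _ := rfl
  calc Real.sqrt (∑ s : Fin r, ∑ t : Fin r, (vecNorm fun i => A i s * B i t) ^ 2)
      ≤ Real.sqrt ((twoInfNorm A) ^ 2 * (frobNorm B) ^ 2) := Real.sqrt_le_sqrt key
    _ = twoInfNorm A * frobNorm B := by
        rw [← mul_pow, Real.sqrt_sq (mul_nonneg (twoInfNorm_nonneg A) (frobNorm_nonneg B))]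


/-- Deterministic bound:
`|⟨H_Ω(ACᵀ), BDᵀ⟩| ≤ ‖H_Ω(𝟏𝟏ᵀ)‖₂ · (‖A‖_{2,∞}‖B‖_F) · (‖C‖_F‖D‖_{2,∞})`. -/
theorem stmt13 {n r : ℕ} (Ω : Set (Fin n × Fin n)) (p : ℝ) (hp : 0 < p)
    (A B C D : Matrix (Fin n) (Fin r) ℝ) :
    |∑ i : Fin n, ∑ j : Fin n, hProj Ω p (A * Cᵀ) i j * (B * Dᵀ) i j| ≤
      specNorm (hProj Ω p (Matrix.of fun _ _ => (1 : ℝ))) *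
        (twoInfNorm A * frobNorm B) * (frobNorm C * twoInfNorm D) := by
  set H : Matrix (Fin n) (Fin n) ℝ := hProj Ω p (Matrix.of fun _ _ => (1 : ℝ)) with hHdef
  have hσ : 0 ≤ specNorm H := specNorm_nonneg H
  -- entrywise expansion
  have h1 : ∀ i j : Fin n, hProj Ω p (A * Cᵀ) i j * (B * Dᵀ) i j
      = ∑ s : Fin r, ∑ t : Fin r, (A i s * B i t) * H i j * (C j s * D j t) := by
    intro i j
    simp only [hHdef, hProj, Matrix.of_apply, Matrix.mul_apply, Matrix.transpose_apply, mul_one]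
    simp only [Finset.mul_sum, Finset.sum_mul]
    rw [Finset.sum_comm]
    refine Finset.sum_congr rfl fun s _ => Finset.sum_congr rfl fun t _ => ?_
    ring
  have expand : (∑ i : Fin n, ∑ j : Fin n, hProj Ω p (A * Cᵀ) i j * (B * Dᵀ) i j)
      = ∑ s : Fin r, ∑ t : Fin r, ∑ i : Fin n, ∑ j : Fin n,
          (A i s * B i t) * H i j * (C j s * D j t) := by
    simp only [h1]
    exact sum4_swap _
  set u : Fin r → Fin r → ℝ := fun s t => vecNorm (fun i => A i s * B i t) with hu
  set v : Fin r → Fin r → ℝ := fun s t => vecNorm (fun j => C j s * D j t) with hv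
  have step1 : |∑ i : Fin n, ∑ j : Fin n, hProj Ω p (A * Cᵀ) i j * (B * Dᵀ) i j|
      ≤ specNorm H * ∑ s : Fin r, ∑ t : Fin r, u s t * v s t := by
    rw [expand]
    calc |∑ s : Fin r, ∑ t : Fin r, ∑ i : Fin n, ∑ j : Fin n,
            (A i s * B i t) * H i j * (C j s * D j t)|
        ≤ ∑ s : Fin r, ∑ t : Fin r, |∑ i : Fin n, ∑ j : Fin n,
            (A i s * B i t) * H i j * (C j s * D j t)| := by
          calc _ ≤ ∑ s : Fin r, |∑ t : Fin r, ∑ i : Fin n, ∑ j : Fin n,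
              (A i s * B i t) * H i j * (C j s * D j t)| := Finset.abs_sum_le_sum_abs _ _
            _ ≤ _ := Finset.sum_le_sum fun s _ => Finset.abs_sum_le_sum_abs _ _
      _ ≤ ∑ s : Fin r, ∑ t : Fin r, specNorm H * (u s t * v s t) := by
          refine Finset.sum_le_sum fun s _ => Finset.sum_le_sum fun t _ => ?_
          exact bilinear_le H (fun i => A i s * B i t) (fun j => C j s * D j t)
      _ = specNorm H * ∑ s : Fin r, ∑ t : Fin r, u s t * v s t := by
          rw [Finset.mul_sum]
          exact Finset.sum_congr rfl fun s _ => (Finset.mul_sum _ _ _).symm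
  have step2 : ∑ s : Fin r, ∑ t : Fin r, u s t * v s t
      ≤ (twoInfNorm A * frobNorm B) * (frobNorm C * twoInfNorm D) := by
    have hcs : ∑ s : Fin r, ∑ t : Fin r, u s t * v s t
        ≤ Real.sqrt (∑ s, ∑ t, u s t ^ 2) * Real.sqrt (∑ s, ∑ t, v s t ^ 2) := by
      have h := cs_sum (fun x : Fin r × Fin r => u x.1 x.2) (fun x : Fin r × Fin r => v x.1 x.2)
      have e1 : ∑ x : Fin r × Fin r, u x.1 x.2 * v x.1 x.2
          = ∑ s : Fin r, ∑ t : Fin r, u s t * v s t := Fintype.sum_prod_type _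
      have e2 : vecNorm (fun x : Fin r × Fin r => u x.1 x.2)
          = Real.sqrt (∑ s, ∑ t, u s t ^ 2) := by
        rw [vecNorm]; congr 1; exact Fintype.sum_prod_type _
      have e3 : vecNorm (fun x : Fin r × Fin r => v x.1 x.2)
          = Real.sqrt (∑ s, ∑ t, v s t ^ 2) := by
        rw [vecNorm]; congr 1; exact Fintype.sum_prod_type _
      rw [e1, e2, e3] at h
      exact le_trans (le_abs_self _) h
    have hU : Real.sqrt (∑ s, ∑ t, u s t ^ 2) ≤ twoInfNorm A * frobNorm B := pairNorm_le A B
    have hV : Real.sqrt (∑ s, ∑ t, v s t ^ 2) ≤ frobNorm C * twoInfNorm D := by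
      have hswap : ∑ s : Fin r, ∑ t : Fin r, v s t ^ 2
          = ∑ s : Fin r, ∑ t : Fin r, (vecNorm fun j => D j s * C j t) ^ 2 := by
        rw [Finset.sum_comm]
        refine Finset.sum_congr rfl fun s _ => Finset.sum_congr rfl fun t _ => ?_
        simp only [hv]
        congr 2
        funext j
        ring
      rw [hswap, mul_comm (frobNorm C)]
      exact pairNorm_le D C
    calc ∑ s : Fin r, ∑ t : Fin r, u s t * v s t
        ≤ Real.sqrt (∑ s, ∑ t, u s t ^ 2) * Real.sqrt (∑ s, ∑ t, v s t ^ 2) := hcs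
      _ ≤ (twoInfNorm A * frobNorm B) * (frobNorm C * twoInfNorm D) := by
          apply mul_le_mul hU hV (Real.sqrt_nonneg _)
          exact mul_nonneg (twoInfNorm_nonneg A) (frobNorm_nonneg B)
  calc |∑ i : Fin n, ∑ j : Fin n, hProj Ω p (A * Cᵀ) i j * (B * Dᵀ) i j|
      ≤ specNorm H * ∑ s : Fin r, ∑ t : Fin r, u s t * v s t := step1
    _ ≤ specNorm H * ((twoInfNorm A * frobNorm B) * (frobNorm C * twoInfNorm D)) :=
        mul_le_mul_of_nonneg_left step2 hσ
    _ = specNorm H * (twoInfNorm A * frobNorm B) * (frobNorm C * twoInfNorm D) := by ring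
end
end
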